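/- arXiv:2312.00730 — 5 statements merged into one kernel-verified Lean document; each statement's English description precedes it below -/
import Mathlib

section
/- Under the Crank-Nicolson update in a constant field B with v^n ⊥ B, the magnitude of the half-step velocity is ‖v^{n+1/2}‖ = ‖v^n‖ / √(1 + Ω²Δt²/4), where Ω = ‖B‖. -/
open Real Filter

noncomputable def cross (a b : EuclideanSpace ℝ (Fin 3)) : EuclideanSpace ℝ (Fin 3) :=
  WithLp.toLp 2 ![a 1 * b 2 - a 2 * b 1, a 2 * b 0 - a 0 * b 2, a 0 * b 1 - a 1 * b 0]

/-- Magnitude of the half-step velocity of the Crank-Nicolson update. -/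
theorem stmt_2 (B v0 v1 vh : EuclideanSpace ℝ (Fin 3)) (hB : B ≠ 0)
    (Δt : ℝ) (hΔt : 0 < Δt)
    (hupd : v1 = v0 + Δt • cross vh B)
    (hhalf : vh = (1 / 2 : ℝ) • (v0 + v1))
    (hperp : (inner ℝ v0 B : ℝ) = 0) :
    ‖vh‖ = ‖v0‖ / Real.sqrt (1 + ‖B‖ ^ 2 * Δt ^ 2 / 4) := by
  subst hupd
  have hc : ∀ i, vh i = (1/2) * (v0 i + (v0 i + Δt * (cross vh B) i)) := by
    intro i
    conv_lhs => rw [hhalf]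
    simp [PiLp.add_apply, PiLp.smul_apply, smul_eq_mul]
    ring
  have e0 := hc 0
  have e1 := hc 1
  have e2 := hc 2
  simp only [cross, WithLp.ofLp_toLp, Matrix.cons_val_zero, Matrix.cons_val_one, Matrix.head_cons,
    Matrix.cons_val_two, Matrix.tail_cons] at e0 e1 e2
  have f0 : v0 0 = vh 0 - (Δt/2) * (vh 1 * B 2 - vh 2 * B 1) := by linarith
  have f1 : v0 1 = vh 1 - (Δt/2) * (vh 2 * B 0 - vh 0 * B 2) := by linarith
  have f2 : v0 2 = vh 2 - (Δt/2) * (vh 0 * B 1 - vh 1 * B 0) := by linarith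
  have hip : v0 0 * B 0 + v0 1 * B 1 + v0 2 * B 2 = 0 := by
    rw [PiLp.inner_apply] at hperp
    simpa [Fin.sum_univ_three, RCLike.inner_apply, mul_comm] using hperp
  rw [f0, f1, f2] at hip
  have hvb : vh 0 * B 0 + vh 1 * B 1 + vh 2 * B 2 = 0 := by linear_combination hip
  have hB2 : ‖B‖ ^ 2 = B 0 ^ 2 + B 1 ^ 2 + B 2 ^ 2 := by
    rw [EuclideanSpace.norm_eq, Real.sq_sqrt (by positivity)]
    simp [Fin.sum_univ_three, Real.norm_eq_abs, sq_abs]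
  rw [hB2, EuclideanSpace.norm_eq, EuclideanSpace.norm_eq]
  simp only [Fin.sum_univ_three, Real.norm_eq_abs, sq_abs]
  have hcpos : 0 < 1 + (B 0 ^ 2 + B 1 ^ 2 + B 2 ^ 2) * Δt ^ 2 / 4 := by positivity
  have key : vh 0 ^ 2 + vh 1 ^ 2 + vh 2 ^ 2 =
      (v0 0 ^ 2 + v0 1 ^ 2 + v0 2 ^ 2) / (1 + (B 0 ^ 2 + B 1 ^ 2 + B 2 ^ 2) * Δt ^ 2 / 4) := by
    rw [eq_div_iff (ne_of_gt hcpos), f0, f1, f2]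
    linear_combination (Δt ^ 2 / 4 * (vh 0 * B 0 + vh 1 * B 1 + vh 2 * B 2)) * hvb
  rw [key, Real.sqrt_div (by positivity)]
end

section
/- Under the Crank-Nicolson update in a constant field B with v^n ⊥ B, the position displacement magnitude satisfies ‖x^{n+1} - x^n‖ = Δt ‖v^{n+1/2}‖ = 2ρ sin(θ/2), where ρ = ‖v^n‖/Ω, Ω = ‖B‖, and θ is defined by cos θ = (1 - Ω²Δt²/4)/(1 + Ω²Δt²/4) with sin(θ/2) ≥ 0. -/
open Real Filter

/-- The Crank-Nicolson position displacement magnitude is Δt‖v^{n+1/2}‖ = 2ρ sin(θ/2). -/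
theorem stmt_3 (B v0 v1 vh x0 x1 : EuclideanSpace ℝ (Fin 3)) (hB : B ≠ 0)
    (Δt : ℝ) (hΔt : 0 < Δt)
    (hx : x1 = x0 + Δt • vh)
    (hupd : v1 = v0 + Δt • cross vh B)
    (hhalf : vh = (1 / 2 : ℝ) • (v0 + v1))
    (hperp : (inner ℝ v0 B : ℝ) = 0) :
    ‖x1 - x0‖ = Δt * ‖vh‖ ∧
    ‖x1 - x0‖ = 2 * (‖v0‖ / ‖B‖) *
      Real.sin (Real.arccos ((1 - ‖B‖ ^ 2 * Δt ^ 2 / 4) / (1 + ‖B‖ ^ 2 * Δt ^ 2 / 4)) / 2) := by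
  have hΩ : 0 < ‖B‖ := norm_pos_iff.mpr hB
  have dot : ∀ a b : EuclideanSpace ℝ (Fin 3),
      (inner ℝ a b : ℝ) = a 0 * b 0 + a 1 * b 1 + a 2 * b 2 := by
    intro a b
    simp [PiLp.inner_apply, Fin.sum_univ_three, mul_comm]
  have normsq : ∀ a : EuclideanSpace ℝ (Fin 3), ‖a‖ ^ 2 = a 0 ^ 2 + a 1 ^ 2 + a 2 ^ 2 := by
    intro a
    rw [← real_inner_self_eq_norm_sq, dot]; ring
  have hv0c : ∀ i : Fin 3, v0 i = vh i - (Δt / 2) * cross vh B i := by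
    intro i
    have h1 := congrArg (fun w => w i) hhalf
    have h2 := congrArg (fun w => w i) hupd
    simp only [PiLp.add_apply, PiLp.smul_apply, smul_eq_mul] at h1 h2
    rw [h2] at h1
    linarith
  have hC0 : cross vh B 0 = vh 1 * B 2 - vh 2 * B 1 := rfl
  have hC1 : cross vh B 1 = vh 2 * B 0 - vh 0 * B 2 := rfl
  have hC2 : cross vh B 2 = vh 0 * B 1 - vh 1 * B 0 := rfl
  rw [dot] at hperp
  rw [hv0c 0, hv0c 1, hv0c 2, hC0, hC1, hC2] at hperp
  -- vh ⊥ B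
  have hvB : vh 0 * B 0 + vh 1 * B 1 + vh 2 * B 2 = 0 := by linear_combination hperp
  set c : ℝ := ‖B‖ ^ 2 * Δt ^ 2 / 4 with hcdef
  have hc : 0 < c := by positivity
  have key : ‖v0‖ ^ 2 = ‖vh‖ ^ 2 * (1 + c) := by
    rw [normsq, normsq, hcdef, normsq]
    rw [hv0c 0, hv0c 1, hv0c 2, hC0, hC1, hC2]
    linear_combination (-(Δt ^ 2 / 4) * (vh 0 * B 0 + vh 1 * B 1 + vh 2 * B 2)) * hvB
  have hnv0 : ‖v0‖ = ‖vh‖ * Real.sqrt (1 + c) := by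
    have h1 : ‖v0‖ = Real.sqrt (‖v0‖ ^ 2) := by rw [Real.sqrt_sq (norm_nonneg _)]
    rw [h1, key, Real.sqrt_mul (by positivity), Real.sqrt_sq (norm_nonneg _)]
  have hpart1 : ‖x1 - x0‖ = Δt * ‖vh‖ := by
    rw [hx]
    simp [norm_smul, abs_of_pos hΔt]
  refine ⟨hpart1, ?_⟩
  set t : ℝ := (1 - c) / (1 + c) with htdef
  have h1c : (0:ℝ) < 1 + c := by linarith
  have ht1 : t ≤ 1 := by rw [htdef, div_le_one h1c]; linarith
  have ht2 : -1 ≤ t := by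
    rw [htdef, le_div_iff₀ h1c]; linarith
  have hsin : Real.sin (Real.arccos t / 2) = Real.sqrt (c / (1 + c)) := by
    have hnn : 0 ≤ Real.sin (Real.arccos t / 2) := by
      apply Real.sin_nonneg_of_nonneg_of_le_pi
      · linarith [Real.arccos_nonneg t]
      · linarith [Real.arccos_le_pi t, Real.pi_pos]
    have hsq : Real.sin (Real.arccos t / 2) ^ 2 = c / (1 + c) := by
      rw [Real.sin_sq_eq_half_sub, show 2 * (Real.arccos t / 2) = Real.arccos t by ring,
        Real.cos_arccos ht2 ht1, htdef]
      field_simp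
      ring
    calc Real.sin (Real.arccos t / 2)
        = Real.sqrt (Real.sin (Real.arccos t / 2) ^ 2) := by rw [Real.sqrt_sq hnn]
      _ = Real.sqrt (c / (1 + c)) := by rw [hsq]
  rw [hpart1, hsin, hnv0]
  have hsc : Real.sqrt c = ‖B‖ * Δt / 2 := by
    rw [hcdef, show ‖B‖ ^ 2 * Δt ^ 2 / 4 = (‖B‖ * Δt / 2) ^ 2 by ring,
      Real.sqrt_sq (by positivity)]
  have hs1c : Real.sqrt (1 + c) ≠ 0 := by positivity
  rw [Real.sqrt_div hc.le, hsc]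
  field_simp
end

section
/- Consider the update x^{n+1} = x^n + Δt_n u^{n+1/2}, u^{n+1} = u^n + Δt_n u^{n+1/2} × B with u^{n+1/2} = (u^n + u^{n+1})/2, constant B ∈ ℝ³, u⁰ · B = 0, and an arbitrary sequence of positive time-steps Δt_n. Then all positions x^n lie on a single circle of radius ρ = ‖u⁰‖/‖B‖ in the plane through x⁰ perpendicular to B, provided the first three positions are not collinear. -/
open Real Filter

lemma inner3 (a b : EuclideanSpace ℝ (Fin 3)) :
    (inner ℝ a b : ℝ) = a 0 * b 0 + a 1 * b 1 + a 2 * b 2 := by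
  simp [PiLp.inner_apply, Fin.sum_univ_three, RCLike.inner_apply, mul_comm]

lemma cross_apply0 (a b : EuclideanSpace ℝ (Fin 3)) :
    cross a b 0 = a 1 * b 2 - a 2 * b 1 := rfl
lemma cross_apply1 (a b : EuclideanSpace ℝ (Fin 3)) :
    cross a b 1 = a 2 * b 0 - a 0 * b 2 := rfl
lemma cross_apply2 (a b : EuclideanSpace ℝ (Fin 3)) :
    cross a b 2 = a 0 * b 1 - a 1 * b 0 := rfl

lemma inner_cross_right3 (a b : EuclideanSpace ℝ (Fin 3)) :
    (inner ℝ (cross a b) b : ℝ) = 0 := by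
  rw [inner3, cross_apply0, cross_apply1, cross_apply2]; ring

lemma inner_cross_left3 (a b : EuclideanSpace ℝ (Fin 3)) :
    (inner ℝ (cross a b) a : ℝ) = 0 := by
  rw [inner3, cross_apply0, cross_apply1, cross_apply2]; ring

lemma inner_cross_cross3 (a b : EuclideanSpace ℝ (Fin 3)) :
    (inner ℝ (cross a b) (cross a b) : ℝ)
      = (inner ℝ a a : ℝ) * (inner ℝ b b : ℝ) - (inner ℝ a b : ℝ) ^ 2 := by
  simp only [inner3, cross_apply0, cross_apply1, cross_apply2]; ring

lemma cross_cross3 (a b : EuclideanSpace ℝ (Fin 3)) :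
    cross (cross a b) b = (inner ℝ a b : ℝ) • b - (inner ℝ b b : ℝ) • a := by
  ext i
  fin_cases i <;>
    simp [cross_apply0, cross_apply1, cross_apply2, cross, inner3, PiLp.sub_apply,
      PiLp.smul_apply, smul_eq_mul, Fin.sum_univ_three, -inner_self_eq_norm_sq_to_K] <;> ring

lemma cross_add_smul3 (a b c : EuclideanSpace ℝ (Fin 3)) (r : ℝ) :
    cross (a + r • b) c = cross a c + r • cross b c := by
  ext i
  fin_cases i <;>
    simp [cross_apply0, cross_apply1, cross_apply2, cross, PiLp.add_apply,
      PiLp.smul_apply, smul_eq_mul] <;> ring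

/-- Lemma 1: with constant B, u⁰ ⊥ B, and an arbitrary sequence of positive
time-steps, all the Crank-Nicolson positions x^n lie on a single circle of
radius ρ = ‖u⁰‖/‖B‖ in the plane through x⁰ perpendicular to B
(provided the first three positions are not collinear). -/
theorem stmt_7 (B : EuclideanSpace ℝ (Fin 3)) (hB : B ≠ 0)
    (x u uh : ℕ → EuclideanSpace ℝ (Fin 3)) (Δt : ℕ → ℝ)
    (hΔt : ∀ n, 0 < Δt n)
    (hx : ∀ n, x (n + 1) = x n + Δt n • uh n)
    (hu : ∀ n, u (n + 1) = u n + Δt n • cross (uh n) B)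
    (hhalf : ∀ n, uh n = (1 / 2 : ℝ) • (u n + u (n + 1)))
    (hperp : (inner ℝ (u 0) B : ℝ) = 0)
    (hu0 : u 0 ≠ 0)
    (hnc : ¬ Collinear ℝ ({x 0, x 1, x 2} : Set (EuclideanSpace ℝ (Fin 3)))) :
    ∃ c : EuclideanSpace ℝ (Fin 3),
      (inner ℝ (c - x 0) B : ℝ) = 0 ∧
      ∀ n, ‖x n - c‖ = ‖u 0‖ / ‖B‖ ∧ (inner ℝ (x n - x 0) B : ℝ) = 0 := by
  set bb : ℝ := (inner ℝ B B : ℝ) with hbb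
  have hBn : ‖B‖ ≠ 0 := norm_ne_zero_iff.mpr hB
  have hbbnorm : bb = ‖B‖ ^ 2 := real_inner_self_eq_norm_sq B
  have hbbpos : 0 < bb := by rw [hbbnorm]; positivity
  set k : ℝ := bb⁻¹ with hk
  have hkbb : k * bb = 1 := inv_mul_cancel₀ hbbpos.ne'
  -- u n ⊥ B for all n
  have huB : ∀ n, (inner ℝ (u n) B : ℝ) = 0 := by
    intro n
    induction n with
    | zero => exact hperp
    | succ n ih =>
      rw [hu n, inner_add_left, real_inner_smul_left, inner_cross_right3, ih]
      ring
  -- uh n ⊥ B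
  have huhB : ∀ n, (inner ℝ (uh n) B : ℝ) = 0 := by
    intro n
    rw [hhalf n, real_inner_smul_left, inner_add_left, huB n, huB (n + 1)]
    ring
  -- energy conservation
  have hnorm : ∀ n, (inner ℝ (u n) (u n) : ℝ) = (inner ℝ (u 0) (u 0) : ℝ) := by
    intro n
    induction n with
    | zero => rfl
    | succ n ih =>
      have hsum : u n + u (n + 1) = (2 : ℝ) • uh n := by
        rw [hhalf n]; module
      have hkey : (inner ℝ (cross (uh n) B) (u n) : ℝ)
          + (inner ℝ (cross (uh n) B) (u (n + 1)) : ℝ) = 0 := by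
        rw [← inner_add_right, hsum, real_inner_smul_right, inner_cross_left3]
        ring
      have e1 : (inner ℝ (u (n+1)) (u (n+1)) : ℝ)
          = (inner ℝ (u n) (u (n+1)) : ℝ)
            + Δt n * (inner ℝ (cross (uh n) B) (u (n+1)) : ℝ) := by
        nth_rewrite 1 [hu n]
        rw [inner_add_left, real_inner_smul_left]
      have e2 : (inner ℝ (u n) (u (n+1)) : ℝ)
          = (inner ℝ (u n) (u n) : ℝ)
            + Δt n * (inner ℝ (cross (uh n) B) (u n) : ℝ) := by
        rw [hu n, inner_add_right, real_inner_smul_right,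
          real_inner_comm (u n) (cross (uh n) B)]
      linear_combination e1 + e2 + Δt n * hkey + ih
  -- center
  set c : EuclideanSpace ℝ (Fin 3) := x 0 + k • cross (u 0) B with hc
  -- invariant: x n - c = -(k • cross (u n) B)
  have hxc : ∀ n, x n - c = -(k • cross (u n) B) := by
    intro n
    induction n with
    | zero => rw [hc]; module
    | succ n ih =>
      rw [hx n]
      have hsplit : x n + Δt n • uh n - c = (x n - c) + Δt n • uh n := by module
      rw [hsplit, ih, hu n, cross_add_smul3, cross_cross3, huhB n, ← hbb]
      match_scalars <;> first
        | ring1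
        | linear_combination (-(Δt n)) * hkbb
        | linear_combination (Δt n) * hkbb
  have hcrossB : ∀ n, (inner ℝ (x n - c) B : ℝ) = 0 := by
    intro n
    rw [hxc n, inner_neg_left, real_inner_smul_left, inner_cross_right3]
    ring
  refine ⟨c, ?_, fun n => ⟨?_, ?_⟩⟩
  · have h0 := hcrossB 0
    rw [show c - x 0 = -(x 0 - c) by abel, inner_neg_left, h0, neg_zero]
  · -- radius
    have hsq : ‖x n - c‖ ^ 2 = (‖u 0‖ / ‖B‖) ^ 2 := by
      rw [← real_inner_self_eq_norm_sq, hxc n, inner_neg_neg, real_inner_smul_left,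
        real_inner_smul_right, inner_cross_cross3, huB n, hnorm n,
        real_inner_self_eq_norm_sq, ← hbb]
      rw [hk, hbbnorm]
      field_simp
      ring
    have h1 : ‖x n - c‖ = Real.sqrt (‖x n - c‖ ^ 2) := by
      rw [Real.sqrt_sq (norm_nonneg _)]
    rw [h1, hsq, Real.sqrt_sq (by positivity)]
  · have hd : x n - x 0 = (x n - c) - (x 0 - c) := by abel
    rw [hd, inner_sub_left, hcrossB n, hcrossB 0, sub_zero]
end

section
/- Let u^{1/2} = (u⁰ + (Δt/2) u⁰ × B)/(1 + Ω²Δt²/4) with u⁰ ⊥ B, Ω = ‖B‖. Then u^{1/2} → (2/(ΩΔt)) times a vector of bounded norm as Δt → ∞; precisely, Δt · u^{1/2} → 2 (u⁰ × B)/Ω² = 2ρ (û⁰ × b) as Δt → ∞, where ρ = ‖u⁰‖/Ω. -/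
open Real Filter

lemma cross_smul_smul (a b : ℝ) (u v : EuclideanSpace ℝ (Fin 3)) :
    cross (a • u) (b • v) = (a * b) • cross u v := by
  ext i
  fin_cases i <;>
    simp [cross, PiLp.smul_apply, smul_eq_mul] <;> ring

lemma lim1 (c : ℝ) (hc : 0 < c) :
    Tendsto (fun t : ℝ => t * (1 + c * t ^ 2)⁻¹) atTop (nhds 0) := by
  have h : Tendsto (fun t : ℝ => t⁻¹ * (t⁻¹ * t⁻¹ + c)⁻¹) atTop (nhds 0) := by
    have h1 : Tendsto (fun t : ℝ => t⁻¹) atTop (nhds 0) := tendsto_inv_atTop_zero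
    have h2 : Tendsto (fun t : ℝ => (t⁻¹ * t⁻¹ + c)⁻¹) atTop (nhds c⁻¹) := by
      have := ((h1.mul h1).add tendsto_const_nhds).inv₀ (by simpa using hc.ne')
      simpa using this
    simpa using h1.mul h2
  refine h.congr' ?_
  filter_upwards [eventually_gt_atTop (0 : ℝ)] with t ht
  have ht' : t ≠ 0 := ht.ne'
  have hd : 1 + c * t ^ 2 ≠ 0 := by positivity
  field_simp

lemma lim2 (c : ℝ) (hc : 0 < c) :
    Tendsto (fun t : ℝ => t * ((1 + c * t ^ 2)⁻¹ * (t / 2))) atTop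
      (nhds (1 / (2 * c))) := by
  have h : Tendsto (fun t : ℝ => (2 * (t⁻¹ * t⁻¹) + 2 * c)⁻¹) atTop (nhds (1 / (2 * c))) := by
    have h1 : Tendsto (fun t : ℝ => t⁻¹) atTop (nhds 0) := tendsto_inv_atTop_zero
    have := (((tendsto_const_nhds : Tendsto (fun _ : ℝ => (2:ℝ)) atTop (nhds 2)).mul
        (h1.mul h1)).add
      (tendsto_const_nhds : Tendsto (fun _ : ℝ => 2 * c) atTop (nhds (2 * c)))).inv₀
      (by positivity)
    convert this using 2
    norm_num [one_div]
  refine h.congr' ?_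
  filter_upwards [eventually_gt_atTop (0 : ℝ)] with t ht
  have ht' : t ≠ 0 := ht.ne'
  have hd : 1 + c * t ^ 2 ≠ 0 := by positivity
  field_simp

/-- Δt · u^{1/2} → 2 (u⁰ × B)/Ω² = 2ρ (û⁰ × b) as Δt → ∞. -/
theorem stmt_9 (B u0 : EuclideanSpace ℝ (Fin 3)) (hB : B ≠ 0) (hu0 : u0 ≠ 0)
    (hperp : (inner ℝ u0 B : ℝ) = 0) :
    Tendsto
      (fun Δt : ℝ => Δt •
        ((1 + ‖B‖ ^ 2 * Δt ^ 2 / 4)⁻¹ • (u0 + (Δt / 2) • cross u0 B)))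
      atTop (nhds ((2 / ‖B‖ ^ 2) • cross u0 B)) ∧
    (2 / ‖B‖ ^ 2) • cross u0 B =
      (2 * (‖u0‖ / ‖B‖)) • cross (‖u0‖⁻¹ • u0) (‖B‖⁻¹ • B) := by
  have hBn : ‖B‖ ≠ 0 := norm_ne_zero_iff.mpr hB
  have hun : ‖u0‖ ≠ 0 := norm_ne_zero_iff.mpr hu0
  have hBpos : (0 : ℝ) < ‖B‖ := norm_pos_iff.mpr hB
  constructor
  · set c : ℝ := ‖B‖ ^ 2 / 4 with hc
    have hcpos : 0 < c := by positivity
    have key : ∀ Δt : ℝ,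
        Δt • ((1 + ‖B‖ ^ 2 * Δt ^ 2 / 4)⁻¹ • (u0 + (Δt / 2) • cross u0 B)) =
        (Δt * (1 + c * Δt ^ 2)⁻¹) • u0 +
        (Δt * ((1 + c * Δt ^ 2)⁻¹ * (Δt / 2))) • cross u0 B := by
      intro t
      have h4 : ‖B‖ ^ 2 * t ^ 2 / 4 = c * t ^ 2 := by rw [hc]; ring
      rw [h4]
      module
    have hlim := ((lim1 c hcpos).smul_const u0).add ((lim2 c hcpos).smul_const (cross u0 B))
    have : (1 / (2 * c)) = 2 / ‖B‖ ^ 2 := by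
      rw [hc]; field_simp; ring
    rw [this, zero_smul, zero_add] at hlim
    exact (hlim.congr fun t => (key t).symm)
  · rw [cross_smul_smul, smul_smul]
    congr 1
    field_simp
end

section
/- Suppose a sequence of vectors a^n in the plane perpendicular to b satisfies a^{n+1} = a^n + d^n, where the displacement d^n has magnitude alternating between two fixed values D and δ (D for even n, δ for odd n) and each d^{n+1} is the rotation of d^n (rescaled to the appropriate magnitude) by a fixed angle φ ∈ (0, π) about b. Then all points a^n lie on a single circle of radius r = (1/2)√(D² + δ² + 2Dδ cos φ)/|sin φ|. -/
open Real Filter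

lemma inner_expand (x y : EuclideanSpace ℝ (Fin 3)) :
    (inner ℝ x y : ℝ) = x 0 * y 0 + x 1 * y 1 + x 2 * y 2 := by
  simp [PiLp.inner_apply, Fin.sum_univ_three, RCLike.inner_apply, conj_trivial]; ring

lemma cross_smul_add (b x y : EuclideanSpace ℝ (Fin 3)) (r s : ℝ) :
    cross b (r • x + s • y) = r • cross b x + s • cross b y := by
  ext i
  fin_cases i <;>
    simp [cross, PiLp.smul_apply, PiLp.add_apply, smul_eq_mul] <;> ring

lemma cross_smul_sub (b x y : EuclideanSpace ℝ (Fin 3)) (r s : ℝ) :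
    cross b (r • x - s • y) = r • cross b x - s • cross b y := by
  ext i
  fin_cases i <;>
    simp [cross, PiLp.smul_apply, PiLp.sub_apply, smul_eq_mul] <;> ring

lemma inner_cross_self (b x : EuclideanSpace ℝ (Fin 3)) :
    (inner ℝ x (cross b x) : ℝ) = 0 := by
  rw [inner_expand]
  simp only [cross, Matrix.cons_val_zero, Matrix.cons_val_one, Matrix.head_cons,
    Matrix.cons_val_two, Matrix.tail_cons]
  ring

lemma inner_cross_self' (b x : EuclideanSpace ℝ (Fin 3)) :
    (inner ℝ (cross b x) x : ℝ) = 0 := by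
  rw [real_inner_comm]; exact inner_cross_self b x

lemma inner_cross_cross (b x y : EuclideanSpace ℝ (Fin 3)) :
    (inner ℝ (cross b x) (cross b y) : ℝ) =
      (inner ℝ b b : ℝ) * (inner ℝ x y : ℝ) - (inner ℝ b x : ℝ) * (inner ℝ b y : ℝ) := by
  simp only [inner_expand]
  simp only [cross, Matrix.cons_val_zero, Matrix.cons_val_one, Matrix.head_cons,
    Matrix.cons_val_two, Matrix.tail_cons]
  ring

lemma cross_cross2 (b x : EuclideanSpace ℝ (Fin 3)) :
    cross b (cross b x) = ((inner ℝ b x : ℝ)) • b - ((inner ℝ b b : ℝ)) • x := by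
  ext i
  fin_cases i <;>
    simp [cross, inner_expand, PiLp.smul_apply, PiLp.sub_apply, smul_eq_mul, Fin.sum_univ_three,
      EuclideanSpace.norm_sq_eq, Real.norm_eq_abs, sq_abs] <;> ring

/-- If the displacements of a planar sequence alternate in magnitude between D
(even steps) and δ (odd steps), and each displacement direction is the
rotation of the previous one by a fixed angle φ about the unit normal b, then
all the points lie on a single circle of radius
(1/2)√(D² + δ² + 2Dδ cos φ)/|sin φ|. -/
theorem stmt_13 (b : EuclideanSpace ℝ (Fin 3)) (hb : ‖b‖ = 1)
    (D δ φ : ℝ) (hD : 0 < D) (hδ : 0 < δ) (hφ : φ ∈ Set.Ioo 0 Real.pi)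
    (a d : ℕ → EuclideanSpace ℝ (Fin 3))
    (ha0 : (inner ℝ (a 0) b : ℝ) = 0)
    (hdperp : ∀ n, (inner ℝ (d n) b : ℝ) = 0)
    (hmag : ∀ n, ‖d n‖ = if Even n then D else δ)
    (hrot : ∀ n, (‖d (n + 1)‖)⁻¹ • d (n + 1) =
      Real.cos φ • ((‖d n‖)⁻¹ • d n) +
        Real.sin φ • cross b ((‖d n‖)⁻¹ • d n))
    (hstep : ∀ n, a (n + 1) = a n + d n) :
    ∃ c : EuclideanSpace ℝ (Fin 3), ∀ n,
      ‖a n - c‖ =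
        1 / 2 * Real.sqrt (D ^ 2 + δ ^ 2 + 2 * D * δ * Real.cos φ) / |Real.sin φ| := by
  have hsin : 0 < Real.sin φ := Real.sin_pos_of_pos_of_lt_pi hφ.1 hφ.2
  set cφ := Real.cos φ with hcφ
  set sφ := Real.sin φ with hsφ
  have hsc : sφ ^ 2 + cφ ^ 2 = 1 := Real.sin_sq_add_cos_sq φ
  set m : ℕ → ℝ := fun n => if Even n then D else δ with hm
  have hm_pos : ∀ n, 0 < m n := by
    intro n; simp only [hm]; split <;> assumption
  have hmag' : ∀ n, ‖d n‖ = m n := hmag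
  have hm2 : ∀ n, m (n + 2) = m n := by
    intro n; simp [hm, Nat.even_add]
  set u : ℕ → EuclideanSpace ℝ (Fin 3) := fun n => (m n)⁻¹ • d n with hu
  have hd : ∀ n, d n = m n • u n := by
    intro n; rw [hu]; simp [smul_smul, mul_inv_cancel₀ (hm_pos n).ne']
  have hun : ∀ n, ‖u n‖ = 1 := by
    intro n
    rw [hu]; simp only [norm_smul, hmag' n, norm_inv, Real.norm_eq_abs,
      abs_of_pos (hm_pos n)]
    field_simp
    exact div_self (hm_pos n).ne'
  have huu : ∀ n, (inner ℝ (u n) (u n) : ℝ) = 1 := by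
    intro n; rw [real_inner_self_eq_norm_sq, hun n]; norm_num
  have hbb : (inner ℝ b b : ℝ) = 1 := by
    rw [real_inner_self_eq_norm_sq, hb]; norm_num
  have hub : ∀ n, (inner ℝ (u n) b : ℝ) = 0 := by
    intro n
    show (inner ℝ ((m n)⁻¹ • d n) b : ℝ) = 0
    rw [real_inner_smul_left, hdperp n, mul_zero]
  have hbu : ∀ n, (inner ℝ b (u n) : ℝ) = 0 := by
    intro n; rw [real_inner_comm]; exact hub n
  have hurec : ∀ n, u (n + 1) = cφ • u n + sφ • cross b (u n) := by
    intro n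
    have := hrot n
    rwa [hmag' n, hmag' (n + 1)] at this
  have hcrossu : ∀ n, cross b (u (n + 1)) = cφ • cross b (u n) - sφ • u n := by
    intro n
    rw [hurec n, cross_smul_add, cross_cross2, hbu n, hbb, zero_smul, one_smul,
      zero_sub, smul_neg]
    abel
  set q0 : ℝ := (δ + D * cφ) / (2 * sφ) with hq0
  set c0 : EuclideanSpace ℝ (Fin 3) := a 0 + (D / 2) • u 0 + q0 • cross b (u 0) with hc0
  set v : ℕ → EuclideanSpace ℝ (Fin 3) := fun n => a n - c0 with hv
  have hv0 : v 0 = -((D / 2) • u 0 + q0 • cross b (u 0)) := by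
    rw [hv, hc0]; abel
  have hvrec : ∀ n, v (n + 1) = v n + m n • u n := by
    intro n; simp only [hv, hstep n, hd n]; abel
  set R2 : ℝ := (D ^ 2 + δ ^ 2 + 2 * D * δ * cφ) / (4 * sφ ^ 2) with hR2
  have hm0 : m 0 = D := by simp [hm]
  have hm1 : m 1 = δ := by simp [hm]
  have key : ∀ n, (inner ℝ (v n) (u n) : ℝ) = -(m n) / 2 ∧
      (inner ℝ (v n) (cross b (u n)) : ℝ) = -(m (n + 1) + m n * cφ) / (2 * sφ) ∧
      (inner ℝ (v n) (v n) : ℝ) = R2 := by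
    intro n
    induction n with
    | zero =>
      have hcc : (inner ℝ (cross b (u 0)) (cross b (u 0)) : ℝ) = 1 := by
        rw [inner_cross_cross, hbb, hbu 0, huu 0]; ring
      refine ⟨?_, ?_, ?_⟩
      · rw [hv0]
        simp only [inner_neg_left, inner_add_left, real_inner_smul_left,
          huu 0, inner_cross_self' b (u 0)]
        rw [hm0]; ring
      · rw [hv0]
        simp only [inner_neg_left, inner_add_left, real_inner_smul_left,
          inner_cross_self b (u 0), hcc]
        rw [hm0, hm1, hq0]; ring
      · rw [hv0]
        simp only [inner_neg_neg, inner_add_left, inner_add_right,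
          real_inner_smul_left, real_inner_smul_right,
          huu 0, hcc, inner_cross_self b (u 0), inner_cross_self' b (u 0)]
        rw [hq0, hR2]
        field_simp
        ring_nf
        linear_combination (4 * D ^ 2) * hsc
    | succ n ih =>
      obtain ⟨hp, hq, hr⟩ := ih
      have huc : (inner ℝ (u n) (cross b (u n)) : ℝ) = 0 := inner_cross_self b (u n)
      have hcu : (inner ℝ (cross b (u n)) (u n) : ℝ) = 0 := inner_cross_self' b (u n)
      have hmrec : m (n + 1 + 1) = m n := hm2 n
      refine ⟨?_, ?_, ?_⟩
      · rw [hvrec n, hurec n]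
        simp only [inner_add_left, inner_add_right, real_inner_smul_left,
          real_inner_smul_right, huu n, huc, hp, hq]
        field_simp
        ring
      · rw [hvrec n, hcrossu n]
        simp only [inner_add_left, inner_sub_right, real_inner_smul_left,
          real_inner_smul_right, huu n, huc, hp, hq, hmrec]
        field_simp
        linear_combination (-m n) * hsc
      · rw [hvrec n]
        have hp' : (inner ℝ (u n) (v n) : ℝ) = -m n / 2 := by
          rw [real_inner_comm]; exact hp
        simp only [inner_add_left, inner_add_right, real_inner_smul_left,
          real_inner_smul_right, huu n, hp, hp', hr]
        ring
  refine ⟨c0, fun n => ?_⟩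
  have hvv : ‖a n - c0‖ ^ 2 = R2 := by
    rw [← real_inner_self_eq_norm_sq]; exact (key n).2.2
  have hN : 0 ≤ D ^ 2 + δ ^ 2 + 2 * D * δ * cφ := by
    have h1 : -1 ≤ cφ := by rw [hcφ]; exact Real.neg_one_le_cos φ
    nlinarith [sq_nonneg (D - δ), mul_nonneg (mul_pos hD hδ).le (by linarith : (0:ℝ) ≤ cφ + 1)]
  have habs : |Real.sin φ| = sφ := abs_of_pos hsin
  have hr2 : R2 = (1 / 2 * Real.sqrt (D ^ 2 + δ ^ 2 + 2 * D * δ * cφ) / sφ) ^ 2 := by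
    rw [div_pow, mul_pow, Real.sq_sqrt hN, hR2,
      div_eq_div_iff (mul_pos (by norm_num) (pow_pos hsin 2)).ne' (pow_pos hsin 2).ne']
    ring
  rw [← Real.sqrt_sq (norm_nonneg (a n - c0)), hvv, hr2, habs,
    Real.sqrt_sq (by positivity)]
end
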